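/- Let μ₂ be the positive Borel measure on ℝ² defined by μ₂(U) := π ∫_ℝ χ_U(t,t) dt for Borel sets U ⊆ ℝ² (i.e. μ₂ is the pushforward of π times Lebesgue measure on ℝ under t ↦ (t,t)). Then for all z₁, z₂ ∈ ℂ with Im z₁ < 0 and Im z₂ > 0, it holds that π^{−2} ∫_{ℝ²} K_2((z₁,z₂),t) dμ₂(t) = −i/2 + 1/(z₂−z₁) − 1/(i+z₂); and for all z₁, z₂ ∈ ℂ with Im z₁ < 0 and Im z₂ < 0, it holds that π^{−2} ∫_{ℝ²} K_2((z₁,z₂),t) dμ₂(t) = −i/2. In particular, the value on the component ℂ^− × ℂ^+ depends explicitly on both variables, so this Cauchy-type function does not satisfy the variable non-dependence property. -/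

import Mathlib

open Complex MeasureTheory Finset Filter Topology

/-- The kernel `K_n`. -/
noncomputable def kernelK (n : ℕ) (z : Fin n → ℂ) (t : Fin n → ℝ) : ℂ :=
  Complex.I * ((2 / (2 * Complex.I) ^ n) *
      ∏ ℓ : Fin n, (((t ℓ : ℂ) - z ℓ)⁻¹ - ((t ℓ : ℂ) + Complex.I)⁻¹) -
    (1 / (2 * Complex.I) ^ n) *
      ∏ ℓ : Fin n, (((t ℓ : ℂ) - Complex.I)⁻¹ - ((t ℓ : ℂ) + Complex.I)⁻¹))

/-- The selective conjugation map `Ψ_B`. -/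
noncomputable def PsiMap (n : ℕ) (B : Finset (Fin n)) (z w : Fin n → ℂ) : Fin n → ℂ :=
  fun j => if j ∈ B then (starRingEnd ℂ) (w j) else z j

/-- The poly cut-plane `(ℂ∖ℝ)^n`. -/
def polyCutPlane (n : ℕ) : Set (Fin n → ℂ) := {z | ∀ j, (z j).im ≠ 0}

/-- The poly upper half-plane `ℂ^{+n}`. -/
def upperPoly (n : ℕ) : Set (Fin n → ℂ) := {z | ∀ j, 0 < (z j).im}

/-- The growth condition for a positive Borel measure on `ℝ^n`. -/
def GrowthCondition (n : ℕ) (μ : Measure (Fin n → ℝ)) : Prop :=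
  ∫⁻ t, ENNReal.ofReal (∏ ℓ : Fin n, (1 + (t ℓ) ^ 2)⁻¹) ∂μ < ⊤

/-- The factors `N_{-1}, N_0, N_1`. -/
noncomputable def Nfun (ρ : ℤ) (z : ℂ) (t : ℝ) : ℂ :=
  if ρ = -1 then (1 / (2 * Complex.I)) * (((t : ℂ) - z)⁻¹ - ((t : ℂ) - Complex.I)⁻¹)
  else if ρ = 0 then
    (1 / (2 * Complex.I)) * (((t : ℂ) - Complex.I)⁻¹ - ((t : ℂ) + Complex.I)⁻¹)
  else (1 / (2 * Complex.I)) * (((t : ℂ) + Complex.I)⁻¹ - ((t : ℂ) - (starRingEnd ℂ) z)⁻¹)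

/-- The Nevanlinna condition for a positive Borel measure on `ℝ^n`: the sum runs over all
`ρ ∈ {-1,0,1}^n` containing both `-1` and `1` (encoded via `Fin 3`, `k ↦ k - 1`). -/
def NevanlinnaCondition (n : ℕ) (μ : Measure (Fin n → ℝ)) : Prop :=
  ∀ z : Fin n → ℂ, (∀ j, 0 < (z j).im) →
    ∑ ρ ∈ Finset.univ.filter
        (fun ρ : Fin n → Fin 3 => (∃ j, ρ j = 0) ∧ (∃ j, ρ j = 2)),
      ∫ t, ∏ j : Fin n, Nfun ((ρ j : ℤ) - 1) (z j) (t j) ∂μ = 0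

/-- The symmetry formula for a function on the poly cut-plane. -/
def SymmetryFormula (n : ℕ) (f : (Fin n → ℂ) → ℂ) : Prop :=
  ∀ z ∈ polyCutPlane n,
    f z = ∑ B ∈ Finset.univ.powerset.filter (fun B : Finset (Fin n) => B ≠ ∅),
      (-1 : ℂ) ^ (B.card + 1) *
        (starRingEnd ℂ) (f (PsiMap n B (fun _ => Complex.I) z))

/-- The variable non-dependence property. -/
def VarNonDep (n : ℕ) (f : (Fin n → ℂ) → ℂ) : Prop :=
  ∀ z ∈ polyCutPlane n, ∀ w ∈ polyCutPlane n,
    (∃ j, (z j).im < 0) → (∀ j, (z j).im < 0 ↔ (w j).im < 0) →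
    (∀ j, (z j).im < 0 → z j = w j) → f z = f w

/-- The upper Stoltz domain with centre `0` and angle `θ`. -/
def upperStoltz (θ : ℝ) : Set ℂ :=
  {w | 0 < w.im ∧ θ ≤ Complex.arg w ∧ Complex.arg w ≤ Real.pi - θ}

/-- The lower Stoltz domain with centre `0` and angle `θ`. -/
def lowerStoltz (θ : ℝ) : Set ℂ :=
  {w | (starRingEnd ℂ) w ∈ upperStoltz θ}

/-- The filter of `|w| → ∞` within a set `S ⊆ ℂ`. -/
noncomputable def stoltzFilter (S : Set ℂ) : Filter ℂ :=
  (Filter.comap (fun w : ℂ => ‖w‖) Filter.atTop) ⊓ Filter.principal S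

/-- The measure `μ₂` on `ℝ²`: `π` times the pushforward of Lebesgue measure under `t ↦ (t,t)`,
i.e. `μ₂(U) = π ∫_ℝ χ_U(t,t) dt`. -/
noncomputable def muDiag : Measure (Fin 2 → ℝ) :=
  ENNReal.ofReal Real.pi •
    Measure.map (fun t : ℝ => (fun _ : Fin 2 => t)) volume

lemma aux_sub_ne (a : ℂ) (ha : a.im ≠ 0) (t : ℝ) : (t : ℂ) - a ≠ 0 := by
  intro h
  apply ha
  have := congrArg Complex.im h
  simpa using this.symm

lemma aux_slit (a : ℂ) (ha : a.im ≠ 0) (t : ℝ) : (t : ℂ) - a ∈ Complex.slitPlane := by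
  rw [Complex.mem_slitPlane_iff]
  right
  simp only [Complex.sub_im, Complex.ofReal_im, zero_sub, ne_eq, neg_eq_zero]
  exact ha

lemma aux_hasDerivAt_log_sub (a : ℂ) (ha : a.im ≠ 0) (t : ℝ) :
    HasDerivAt (fun s : ℝ => Complex.log ((s:ℂ) - a)) (((t:ℂ) - a)⁻¹) t := by
  have h1 : HasDerivAt (fun z : ℂ => Complex.log (z - a)) (((t:ℂ) - a)⁻¹) ((t:ℂ)) := by
    have h2 := (Complex.hasDerivAt_log (aux_slit a ha t)).comp ((t:ℂ))
      ((hasDerivAt_id ((t:ℂ))).sub_const a)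
    rw [mul_one] at h2
    exact h2
  exact h1.comp_ofReal

lemma aux_normSq_lower (a : ℂ) (ha : a.im ≠ 0) (t : ℝ) :
    1 + t^2 ≤ (2 + (1 + 2*a.re^2)/a.im^2) * Complex.normSq ((t:ℂ) - a) := by
  have h1 : Complex.normSq ((t:ℂ) - a) = (t - a.re)^2 + a.im^2 := by
    simp [Complex.normSq_apply]; ring
  have hm : (0:ℝ) < a.im^2 := by positivity
  have key : (1 + 2*a.re^2)/a.im^2 * a.im^2 = 1 + 2*a.re^2 := div_mul_cancel₀ _ (ne_of_gt hm)
  have hc : (0:ℝ) ≤ (1 + 2*a.re^2)/a.im^2 := by positivity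
  rw [h1]
  nlinarith [sq_nonneg (t - 2*a.re), sq_nonneg (t - a.re), mul_nonneg hc (sq_nonneg (t - a.re))]



lemma aux_integrable (a b : ℂ) (ha : a.im ≠ 0) (hb : b.im ≠ 0) :
    Integrable (fun t : ℝ => ((t:ℂ) - a)⁻¹ * ((t:ℂ) - b)⁻¹) := by
  set Ka := 2 + (1 + 2*a.re^2)/a.im^2 with hKa
  set Kb := 2 + (1 + 2*b.re^2)/b.im^2 with hKb
  have hKa0 : (0:ℝ) < Ka := by rw [hKa]; positivity
  have hKb0 : (0:ℝ) < Kb := by rw [hKb]; positivity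
  have hs0 : (0:ℝ) < Real.sqrt (Ka*Kb) := Real.sqrt_pos.mpr (by positivity)
  have hcont : Continuous (fun t : ℝ => ((t:ℂ) - a)⁻¹ * ((t:ℂ) - b)⁻¹) :=
    ((Complex.continuous_ofReal.sub continuous_const).inv₀ (aux_sub_ne a ha)).mul
      ((Complex.continuous_ofReal.sub continuous_const).inv₀ (aux_sub_ne b hb))
  apply Integrable.mono' ((integrable_inv_one_add_sq).const_mul (Real.sqrt (Ka*Kb)))
    hcont.aestronglyMeasurable
  filter_upwards with t
  have h1t : (0:ℝ) < 1 + t^2 := by positivity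
  have hA := aux_normSq_lower a ha t
  have hB := aux_normSq_lower b hb t
  rw [← hKa] at hA
  rw [← hKb] at hB
  have habs : (1+t^2) / Real.sqrt (Ka*Kb) ≤ ‖(t:ℂ)-a‖ * ‖(t:ℂ)-b‖ := by
    have h2 : ((1+t^2)/Real.sqrt (Ka*Kb))^2 ≤ (‖(t:ℂ)-a‖ * ‖(t:ℂ)-b‖)^2 := by
      rw [div_pow, Real.sq_sqrt (by positivity), div_le_iff₀ (by positivity)]
      have e1 : (‖(t:ℂ)-a‖)^2 = Complex.normSq ((t:ℂ)-a) := Complex.sq_norm _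
      have e2 : (‖(t:ℂ)-b‖)^2 = Complex.normSq ((t:ℂ)-b) := Complex.sq_norm _
      have h3 : (1+t^2) * (1+t^2) ≤ (Ka * Complex.normSq ((t:ℂ)-a)) * (Kb * Complex.normSq ((t:ℂ)-b)) :=
        mul_le_mul hA hB (le_of_lt h1t) (mul_nonneg hKa0.le (Complex.normSq_nonneg _))
      calc ((1+t^2))^2 = (1+t^2)*(1+t^2) := by ring
        _ ≤ (Ka * Complex.normSq ((t:ℂ)-a)) * (Kb * Complex.normSq ((t:ℂ)-b)) := h3
        _ = (‖(t:ℂ)-a‖ * ‖(t:ℂ)-b‖)^2 * (Ka*Kb) := by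
            rw [mul_pow, e1, e2]; ring
    calc (1+t^2)/Real.sqrt (Ka*Kb)
        = Real.sqrt (((1+t^2)/Real.sqrt (Ka*Kb))^2) := (Real.sqrt_sq (by positivity)).symm
      _ ≤ Real.sqrt ((‖(t:ℂ)-a‖ * ‖(t:ℂ)-b‖)^2) := Real.sqrt_le_sqrt h2
      _ = ‖(t:ℂ)-a‖ * ‖(t:ℂ)-b‖ := Real.sqrt_sq (by positivity)
  have hne : (0:ℝ) < ‖(t:ℂ)-a‖ * ‖(t:ℂ)-b‖ := by
    have h4 := norm_ne_zero_iff.mpr (aux_sub_ne a ha t)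
    have h5 := norm_ne_zero_iff.mpr (aux_sub_ne b hb t)
    positivity
  rw [norm_mul, norm_inv, norm_inv, ← mul_inv]
  have heq : Real.sqrt (Ka*Kb) * (1+t^2)⁻¹ = ((1+t^2) / Real.sqrt (Ka*Kb))⁻¹ := by
    field_simp
  rw [heq]
  exact inv_anti₀ (by positivity) habs



-- |t - a| tends to infinity
lemma aux_abs_top (a : ℂ) : Tendsto (fun t : ℝ => ‖(t:ℂ) - a‖) atTop atTop := by
  apply tendsto_atTop_mono (fun t => ?_) (tendsto_atTop_add_const_right atTop (-a.re) tendsto_id)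
  have h1 : ((t:ℂ) - a).re = t - a.re := by simp
  calc t + -a.re = ((t:ℂ) - a).re := by rw [h1]; ring
    _ ≤ |((t:ℂ) - a).re| := le_abs_self _
    _ ≤ ‖(t:ℂ) - a‖ := Complex.abs_re_le_norm _

lemma aux_abs_bot (a : ℂ) : Tendsto (fun t : ℝ => ‖(t:ℂ) - a‖) atBot atTop := by
  apply tendsto_atTop_mono (fun t => ?_)
    (tendsto_atTop_add_const_right atBot a.re tendsto_neg_atBot_atTop)
  have h1 : ((t:ℂ) - a).re = t - a.re := by simp
  calc -t + a.re = -((t:ℂ) - a).re := by rw [h1]; ring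
    _ ≤ |((t:ℂ) - a).re| := neg_le_abs _
    _ ≤ ‖(t:ℂ) - a‖ := Complex.abs_re_le_norm _

-- (t-b)⁻¹ → 0
lemma aux_inv_zero (b : ℂ) {l : Filter ℝ}
    (hl : Tendsto (fun t : ℝ => ‖(t:ℂ) - b‖) l atTop) :
    Tendsto (fun t : ℝ => ((t:ℂ) - b)⁻¹) l (𝓝 0) := by
  rw [tendsto_zero_iff_norm_tendsto_zero]
  simp only [norm_inv]
  exact hl.inv_tendsto_atTop

-- ratio → 1
lemma aux_ratio_one (a b : ℂ) (hb : b.im ≠ 0) {l : Filter ℝ}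
    (hl : Tendsto (fun t : ℝ => ‖(t:ℂ) - b‖) l atTop) :
    Tendsto (fun t : ℝ => ((t:ℂ) - a) / ((t:ℂ) - b)) l (𝓝 1) := by
  have h1 : ∀ t : ℝ, ((t:ℂ) - a) / ((t:ℂ) - b) = 1 + (b - a) * ((t:ℂ) - b)⁻¹ := by
    intro t
    field_simp [aux_sub_ne b hb t]
    ring
  simp only [h1]
  have h2 : Tendsto (fun t : ℝ => 1 + (b - a) * ((t:ℂ) - b)⁻¹) l (𝓝 (1 + (b-a) * 0)) :=
    tendsto_const_nhds.add (tendsto_const_nhds.mul (aux_inv_zero b hl))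
  simpa using h2

-- log abs difference → 0
lemma aux_logabs_zero (a b : ℂ) (ha : a.im ≠ 0) (hb : b.im ≠ 0) {l : Filter ℝ}
    (hla : Tendsto (fun t : ℝ => ‖(t:ℂ) - a‖) l atTop)
    (hlb : Tendsto (fun t : ℝ => ‖(t:ℂ) - b‖) l atTop) :
    Tendsto (fun t : ℝ => Real.log (‖(t:ℂ) - a‖)
      - Real.log (‖(t:ℂ) - b‖)) l (𝓝 0) := by
  have h1 : Tendsto (fun t : ℝ => ‖(t:ℂ) - a‖ / ‖(t:ℂ) - b‖) l (𝓝 1) := by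
    have := (continuous_norm.tendsto 1).comp (aux_ratio_one a b hb hlb)
    simpa [Function.comp_def, norm_div] using this
  have h2 : Tendsto (fun t : ℝ => Real.log (‖(t:ℂ) - a‖ / ‖(t:ℂ) - b‖)) l (𝓝 0) := by
    have := (Real.continuousAt_log one_ne_zero).tendsto.comp h1
    simpa [Function.comp_def] using this
  apply h2.congr
  intro t
  rw [Real.log_div (norm_ne_zero_iff.mpr (aux_sub_ne a ha t))
    (norm_ne_zero_iff.mpr (aux_sub_ne b hb t))]


-- core: s²/(s²+m²) → 1
lemma aux_sq_ratio (m : ℝ) (hm : m ≠ 0) {l : Filter ℝ}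
    (hsq : Tendsto (fun s : ℝ => s^2) l atTop) :
    Tendsto (fun s : ℝ => s^2/(s^2+m^2)) l (𝓝 1) := by
  have hd : Tendsto (fun s : ℝ => s^2 + m^2) l atTop :=
    tendsto_atTop_add_const_right l (m^2) hsq
  have h0 : Tendsto (fun s : ℝ => 1 - m^2 * (s^2+m^2)⁻¹) l (𝓝 (1 - m^2 * 0)) :=
    tendsto_const_nhds.sub (tendsto_const_nhds.mul hd.inv_tendsto_atTop)
  have h1 : ∀ s : ℝ, s^2/(s^2+m^2) = 1 - m^2 * (s^2+m^2)⁻¹ := by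
    intro s
    have hne : s^2 + m^2 ≠ 0 := by positivity
    field_simp
    ring
  simp only [h1]
  simpa using h0

lemma aux_core_top (m : ℝ) (hm : m ≠ 0) :
    Tendsto (fun s : ℝ => s / Real.sqrt (s^2+m^2)) atTop (𝓝 1) := by
  have hsq : Tendsto (fun s : ℝ => s^2) atTop atTop := by
    simpa using tendsto_pow_atTop (two_ne_zero)
  have h1 : Tendsto (fun s : ℝ => Real.sqrt (s^2/(s^2+m^2))) atTop (𝓝 1) := by
    have := (Real.continuous_sqrt.tendsto 1).comp (aux_sq_ratio m hm hsq)
    simpa [Function.comp_def] using this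
  apply h1.congr'
  filter_upwards [eventually_gt_atTop 0] with s hs
  rw [Real.sqrt_div' (s^2) ?_]
  · rw [Real.sqrt_sq hs.le]
  · positivity

lemma aux_core_bot (m : ℝ) (hm : m ≠ 0) :
    Tendsto (fun s : ℝ => s / Real.sqrt (s^2+m^2)) atBot (𝓝 (-1)) := by
  have hsq : Tendsto (fun s : ℝ => s^2) atBot atTop := by
    have h1 : Tendsto (fun x : ℝ => x^2) atTop atTop := tendsto_pow_atTop two_ne_zero
    have h := h1.comp tendsto_abs_atBot_atTop
    apply h.congr
    intro s
    simp [Function.comp_def, sq_abs]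
  have h2 : Tendsto (fun s : ℝ => Real.sqrt (s^2/(s^2+m^2))) atBot (𝓝 1) := by
    have := (Real.continuous_sqrt.tendsto 1).comp (aux_sq_ratio m hm hsq)
    simpa [Function.comp_def] using this
  have h1 : Tendsto (fun s : ℝ => -Real.sqrt (s^2/(s^2+m^2))) atBot (𝓝 (-1)) := by
    simpa using h2.neg
  apply h1.congr'
  filter_upwards [eventually_lt_atBot 0] with s hs
  rw [Real.sqrt_div' (s^2) (by positivity)]
  rw [show Real.sqrt (s^2) = -s from by rw [Real.sqrt_sq_eq_abs, abs_of_neg hs]]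
  ring



lemma aux_re_abs_ratio_top (a : ℂ) (ha : a.im ≠ 0) :
    Tendsto (fun t : ℝ => ((t:ℂ)-a).re / ‖(t:ℂ)-a‖) atTop (𝓝 1) := by
  have hshift : Tendsto (fun t : ℝ => t + -a.re) atTop atTop :=
    tendsto_atTop_add_const_right atTop (-a.re) tendsto_id
  have h := (aux_core_top a.im ha).comp hshift
  apply h.congr
  intro t
  have habs : ‖(t:ℂ)-a‖ = Real.sqrt ((t + -a.re)^2 + a.im^2) := by
    rw [Complex.norm_def, Complex.normSq_apply]
    congr 1
    simp
    ring
  simp only [Function.comp_def, habs, Complex.sub_re, Complex.ofReal_re]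
  ring_nf

lemma aux_re_abs_ratio_bot (a : ℂ) (ha : a.im ≠ 0) :
    Tendsto (fun t : ℝ => ((t:ℂ)-a).re / ‖(t:ℂ)-a‖) atBot (𝓝 (-1)) := by
  have hshift : Tendsto (fun t : ℝ => t + -a.re) atBot atBot :=
    tendsto_atBot_add_const_right atBot (-a.re) tendsto_id
  have h := (aux_core_bot a.im ha).comp hshift
  apply h.congr
  intro t
  have habs : ‖(t:ℂ)-a‖ = Real.sqrt ((t + -a.re)^2 + a.im^2) := by
    rw [Complex.norm_def, Complex.normSq_apply]
    congr 1
    simp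
    ring
  simp only [Function.comp_def, habs, Complex.sub_re, Complex.ofReal_re]
  ring_nf

lemma aux_arg_top (a : ℂ) (ha : a.im ≠ 0) :
    Tendsto (fun t : ℝ => ((t:ℂ)-a).arg) atTop (𝓝 0) := by
  rcases lt_or_gt_of_ne ha with h | h
  · have him : ∀ t : ℝ, 0 < ((t:ℂ)-a).im := by intro t; simp [Complex.sub_im]; linarith
    have h1 : Tendsto (fun t : ℝ => Real.arccos (((t:ℂ)-a).re / ‖(t:ℂ)-a‖))
        atTop (𝓝 0) := by
      have h2 := (Real.continuous_arccos.tendsto 1).comp (aux_re_abs_ratio_top a ha)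
      simpa [Function.comp_def, Real.arccos_one] using h2
    apply h1.congr
    intro t
    exact (Complex.arg_of_im_pos (him t)).symm
  · have him : ∀ t : ℝ, ((t:ℂ)-a).im < 0 := by intro t; simp [Complex.sub_im]; linarith
    have h1 : Tendsto (fun t : ℝ => -Real.arccos (((t:ℂ)-a).re / ‖(t:ℂ)-a‖))
        atTop (𝓝 0) := by
      have h2 := (Real.continuous_arccos.tendsto 1).comp (aux_re_abs_ratio_top a ha)
      simp only [Function.comp_def, Real.arccos_one] at h2
      simpa using h2.neg
    apply h1.congr
    intro t
    exact (Complex.arg_of_im_neg (him t)).symm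

lemma aux_arg_bot_neg (a : ℂ) (ha : a.im < 0) :
    Tendsto (fun t : ℝ => ((t:ℂ)-a).arg) atBot (𝓝 Real.pi) := by
  have him : ∀ t : ℝ, 0 < ((t:ℂ)-a).im := by intro t; simp [Complex.sub_im]; linarith
  have h1 : Tendsto (fun t : ℝ => Real.arccos (((t:ℂ)-a).re / ‖(t:ℂ)-a‖))
      atBot (𝓝 Real.pi) := by
    have h2 := (Real.continuous_arccos.tendsto (-1)).comp (aux_re_abs_ratio_bot a (ne_of_lt ha))
    simpa [Function.comp_def, Real.arccos_neg_one] using h2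
  apply h1.congr
  intro t
  exact (Complex.arg_of_im_pos (him t)).symm

lemma aux_arg_bot_pos (a : ℂ) (ha : 0 < a.im) :
    Tendsto (fun t : ℝ => ((t:ℂ)-a).arg) atBot (𝓝 (-Real.pi)) := by
  have him : ∀ t : ℝ, ((t:ℂ)-a).im < 0 := by intro t; simp [Complex.sub_im]; linarith
  have h1 : Tendsto (fun t : ℝ => -Real.arccos (((t:ℂ)-a).re / ‖(t:ℂ)-a‖))
      atBot (𝓝 (-Real.pi)) := by
    have h2 := (Real.continuous_arccos.tendsto (-1)).comp (aux_re_abs_ratio_bot a (ne_of_gt ha))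
    simp only [Function.comp_def, Real.arccos_neg_one] at h2
    exact h2.neg
  apply h1.congr
  intro t
  exact (Complex.arg_of_im_neg (him t)).symm



lemma aux_logdiff (a b : ℂ) : ∀ t : ℝ,
    Complex.log ((t:ℂ)-a) - Complex.log ((t:ℂ)-b) =
    ((Real.log (‖(t:ℂ)-a‖) - Real.log (‖(t:ℂ)-b‖) : ℝ) : ℂ)
      + ((((t:ℂ)-a).arg - ((t:ℂ)-b).arg : ℝ) : ℂ) * Complex.I := by
  intro t
  simp only [Complex.log]
  push_cast
  ring

lemma aux_F_top (a b : ℂ) (ha : a.im ≠ 0) (hb : b.im ≠ 0) :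
    Tendsto (fun t : ℝ => Complex.log ((t:ℂ)-a) - Complex.log ((t:ℂ)-b)) atTop (𝓝 0) := by
  have h1 := (Complex.continuous_ofReal.tendsto 0).comp
    (aux_logabs_zero a b ha hb (aux_abs_top a) (aux_abs_top b))
  have harg := (aux_arg_top a ha).sub (aux_arg_top b hb)
  rw [sub_zero] at harg
  have h2 := ((Complex.continuous_ofReal.tendsto 0).comp harg).mul_const Complex.I
  apply Tendsto.congr (fun t => (aux_logdiff a b t).symm)
  have h3 := h1.add h2
  simp only [Function.comp_def, Complex.ofReal_zero, zero_add, zero_mul, add_zero] at h3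
  exact h3

lemma aux_F_bot (a b : ℂ) (ha : a.im ≠ 0) (hb : b.im ≠ 0) :
    Tendsto (fun t : ℝ => Complex.log ((t:ℂ)-a) - Complex.log ((t:ℂ)-b)) atBot
      (𝓝 ((((if a.im < 0 then (1:ℂ) else -1) - (if b.im < 0 then 1 else -1)) * (Real.pi:ℂ))
        * Complex.I)) := by
  have harga : Tendsto (fun t : ℝ => ((t:ℂ)-a).arg) atBot
      (𝓝 ((if a.im < 0 then (1:ℝ) else -1) * Real.pi)) := by
    rcases lt_or_gt_of_ne ha with h | h
    · simpa [if_pos h] using aux_arg_bot_neg a h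
    · simpa [if_neg (not_lt.mpr h.le), neg_mul] using aux_arg_bot_pos a h
  have hargb : Tendsto (fun t : ℝ => ((t:ℂ)-b).arg) atBot
      (𝓝 ((if b.im < 0 then (1:ℝ) else -1) * Real.pi)) := by
    rcases lt_or_gt_of_ne hb with h | h
    · simpa [if_pos h] using aux_arg_bot_neg b h
    · simpa [if_neg (not_lt.mpr h.le), neg_mul] using aux_arg_bot_pos b h
  have h1 := (Complex.continuous_ofReal.tendsto 0).comp
    (aux_logabs_zero a b ha hb (aux_abs_bot a) (aux_abs_bot b))
  have h2 := ((Complex.continuous_ofReal.tendsto _).comp (harga.sub hargb)).mul_const Complex.I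
  apply Tendsto.congr (fun t => (aux_logdiff a b t).symm)
  have h3 := h1.add h2
  simp only [Function.comp_def, Complex.ofReal_zero, zero_add] at h3
  convert h3 using 2
  split_ifs <;> push_cast <;> ring

lemma aux_integral_pair (a b : ℂ) (ha : a.im ≠ 0) (hb : b.im ≠ 0) (hab : a ≠ b) :
    ∫ t : ℝ, ((t:ℂ)-a)⁻¹ * ((t:ℂ)-b)⁻¹ =
      (((if b.im < 0 then (1:ℂ) else -1) - (if a.im < 0 then 1 else -1)) * (Real.pi:ℂ)
        * Complex.I) / (a - b) := by
  have hderiv : ∀ t : ℝ, HasDerivAt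
      (fun t : ℝ => (a-b)⁻¹ * (Complex.log ((t:ℂ)-a) - Complex.log ((t:ℂ)-b)))
      (((t:ℂ)-a)⁻¹ * ((t:ℂ)-b)⁻¹) t := by
    intro t
    have h := ((aux_hasDerivAt_log_sub a ha t).sub (aux_hasDerivAt_log_sub b hb t)).const_mul
      ((a-b)⁻¹)
    refine h.congr_deriv ?_
    have h1 := aux_sub_ne a ha t
    have h2 := aux_sub_ne b hb t
    have h3 : a - b ≠ 0 := sub_ne_zero.mpr hab
    field_simp
    ring
  have htop : Tendsto (fun t : ℝ => (a-b)⁻¹ * (Complex.log ((t:ℂ)-a) - Complex.log ((t:ℂ)-b)))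
      atTop (𝓝 ((a-b)⁻¹ * 0)) := tendsto_const_nhds.mul (aux_F_top a b ha hb)
  have hbot : Tendsto (fun t : ℝ => (a-b)⁻¹ * (Complex.log ((t:ℂ)-a) - Complex.log ((t:ℂ)-b)))
      atBot (𝓝 ((a-b)⁻¹ * ((((if a.im < 0 then (1:ℂ) else -1) - (if b.im < 0 then 1 else -1))
        * (Real.pi:ℂ)) * Complex.I))) := tendsto_const_nhds.mul (aux_F_bot a b ha hb)
  have h := integral_of_hasDerivAt_of_tendsto hderiv (aux_integrable a b ha hb) hbot htop
  rw [h]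
  have h3 : a - b ≠ 0 := sub_ne_zero.mpr hab
  field_simp
  ring

lemma aux_integral_sq (a : ℂ) (ha : a.im ≠ 0) :
    ∫ t : ℝ, ((t:ℂ)-a)⁻¹ * ((t:ℂ)-a)⁻¹ = 0 := by
  have hderiv : ∀ t : ℝ, HasDerivAt (fun t : ℝ => -((t:ℂ)-a)⁻¹)
      (((t:ℂ)-a)⁻¹ * ((t:ℂ)-a)⁻¹) t := by
    intro t
    have h0 : HasDerivAt (fun s : ℝ => ((s:ℂ) - a)) 1 t :=
      ((hasDerivAt_id ((t:ℂ))).sub_const a).comp_ofReal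
    have h1' : HasDerivAt (fun z : ℂ => (z - a)⁻¹) (-(((t:ℂ)-a)^2)⁻¹) ((t:ℂ)) := by
      have := (hasDerivAt_inv (aux_sub_ne a ha t)).comp ((t:ℂ))
        ((hasDerivAt_id ((t:ℂ))).sub_const a)
      rw [mul_one] at this
      exact this
    have h1 := h1'.comp_ofReal.neg
    refine h1.congr_deriv ?_
    have h2 := aux_sub_ne a ha t
    field_simp
  have htop : Tendsto (fun t : ℝ => -((t:ℂ)-a)⁻¹) atTop (𝓝 0) := by
    simpa using (aux_inv_zero a (aux_abs_top a)).neg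
  have hbot : Tendsto (fun t : ℝ => -((t:ℂ)-a)⁻¹) atBot (𝓝 0) := by
    simpa using (aux_inv_zero a (aux_abs_bot a)).neg
  have h := integral_of_hasDerivAt_of_tendsto hderiv (aux_integrable a a ha ha) hbot htop
  rw [h, sub_zero]


lemma aux_L_neg_neg (a b : ℂ) (ha : a.im < 0) (hb : b.im < 0) :
    ∫ t : ℝ, ((t:ℂ)-a)⁻¹ * ((t:ℂ)-b)⁻¹ = 0 := by
  by_cases hab : a = b
  · subst hab; exact aux_integral_sq a (ne_of_lt ha)
  · rw [aux_integral_pair a b (ne_of_lt ha) (ne_of_lt hb) hab, if_pos ha, if_pos hb]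
    simp

lemma aux_L_pos_negI (b : ℂ) (hb : 0 < b.im) :
    ∫ t : ℝ, ((t:ℂ)-b)⁻¹ * ((t:ℂ)-(-Complex.I))⁻¹ = 2 * (Real.pi:ℂ) * Complex.I / (b + Complex.I) := by
  have hbI : b ≠ -Complex.I := by
    intro h; rw [h] at hb; simp at hb; linarith
  rw [aux_integral_pair b (-Complex.I) (ne_of_gt hb) (by simp) hbI,
    if_pos (by simp : (-Complex.I).im < 0), if_neg (not_lt.mpr hb.le)]
  norm_num [sub_neg_eq_add]

lemma aux_L_I : ∫ t : ℝ, ((t:ℂ)-Complex.I)⁻¹ * ((t:ℂ)-(-Complex.I))⁻¹ = (Real.pi:ℂ) := by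
  rw [aux_L_pos_negI Complex.I (by simp)]
  have h2I : (2:ℂ) * Complex.I ≠ 0 := by simp
  field_simp
  ring

lemma aux_kernel_pointwise (z₁ z₂ : ℂ) (t : ℝ) :
    kernelK 2 ![z₁, z₂] (fun _ => t) =
      (-Complex.I/2) * (((t:ℂ)-z₁)⁻¹ * ((t:ℂ)-z₂)⁻¹)
      + (Complex.I/2) * (((t:ℂ)-z₁)⁻¹ * ((t:ℂ)-(-Complex.I))⁻¹)
      + (Complex.I/2) * (((t:ℂ)-z₂)⁻¹ * ((t:ℂ)-(-Complex.I))⁻¹)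
      + (-Complex.I/4) * (((t:ℂ)-(-Complex.I))⁻¹ * ((t:ℂ)-(-Complex.I))⁻¹)
      + (Complex.I/4) * (((t:ℂ)-Complex.I)⁻¹ * ((t:ℂ)-Complex.I)⁻¹)
      + (-Complex.I/2) * (((t:ℂ)-Complex.I)⁻¹ * ((t:ℂ)-(-Complex.I))⁻¹) := by
  have h4 : (2 * Complex.I)^2 = -4 := by
    rw [mul_pow, Complex.I_sq]; norm_num
  simp only [kernelK, Fin.prod_univ_two, Matrix.cons_val_zero, Matrix.cons_val_one,
    Matrix.head_cons, h4, sub_neg_eq_add]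
  ring

lemma aux_integral_kernel (z₁ z₂ : ℂ) (h1 : z₁.im ≠ 0) (h2 : z₂.im ≠ 0) :
    ∫ t : ℝ, kernelK 2 ![z₁, z₂] (fun _ => t) =
      (-Complex.I/2) * (∫ t : ℝ, ((t:ℂ)-z₁)⁻¹ * ((t:ℂ)-z₂)⁻¹)
      + (Complex.I/2) * (∫ t : ℝ, ((t:ℂ)-z₁)⁻¹ * ((t:ℂ)-(-Complex.I))⁻¹)
      + (Complex.I/2) * (∫ t : ℝ, ((t:ℂ)-z₂)⁻¹ * ((t:ℂ)-(-Complex.I))⁻¹)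
      + (-Complex.I/4) * (∫ t : ℝ, ((t:ℂ)-(-Complex.I))⁻¹ * ((t:ℂ)-(-Complex.I))⁻¹)
      + (Complex.I/4) * (∫ t : ℝ, ((t:ℂ)-Complex.I)⁻¹ * ((t:ℂ)-Complex.I)⁻¹)
      + (-Complex.I/2) * (∫ t : ℝ, ((t:ℂ)-Complex.I)⁻¹ * ((t:ℂ)-(-Complex.I))⁻¹) := by
  have hmI : (-Complex.I).im ≠ 0 := by simp
  have hI : (Complex.I).im ≠ 0 := by simp
  have i1 := (aux_integrable z₁ z₂ h1 h2).const_mul (-Complex.I/2)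
  have i2 := (aux_integrable z₁ (-Complex.I) h1 hmI).const_mul (Complex.I/2)
  have i3 := (aux_integrable z₂ (-Complex.I) h2 hmI).const_mul (Complex.I/2)
  have i4 := (aux_integrable (-Complex.I) (-Complex.I) hmI hmI).const_mul (-Complex.I/4)
  have i5 := (aux_integrable Complex.I Complex.I hI hI).const_mul (Complex.I/4)
  have i6 := (aux_integrable Complex.I (-Complex.I) hI hmI).const_mul (-Complex.I/2)
  simp only [aux_kernel_pointwise z₁ z₂]
  have j2 : Integrable (fun t : ℝ => (-Complex.I/2) * (((t:ℂ)-z₁)⁻¹ * ((t:ℂ)-z₂)⁻¹) + (Complex.I/2) * (((t:ℂ)-z₁)⁻¹ * ((t:ℂ)-(-Complex.I))⁻¹)) volume := i1.add i2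
  have j3 : Integrable (fun t : ℝ => (-Complex.I/2) * (((t:ℂ)-z₁)⁻¹ * ((t:ℂ)-z₂)⁻¹) + (Complex.I/2) * (((t:ℂ)-z₁)⁻¹ * ((t:ℂ)-(-Complex.I))⁻¹) + (Complex.I/2) * (((t:ℂ)-z₂)⁻¹ * ((t:ℂ)-(-Complex.I))⁻¹)) volume := j2.add i3
  have j4 : Integrable (fun t : ℝ => (-Complex.I/2) * (((t:ℂ)-z₁)⁻¹ * ((t:ℂ)-z₂)⁻¹) + (Complex.I/2) * (((t:ℂ)-z₁)⁻¹ * ((t:ℂ)-(-Complex.I))⁻¹) + (Complex.I/2) * (((t:ℂ)-z₂)⁻¹ * ((t:ℂ)-(-Complex.I))⁻¹) + (-Complex.I/4) * (((t:ℂ)-(-Complex.I))⁻¹ * ((t:ℂ)-(-Complex.I))⁻¹)) volume := j3.add i4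
  have j5 : Integrable (fun t : ℝ => (-Complex.I/2) * (((t:ℂ)-z₁)⁻¹ * ((t:ℂ)-z₂)⁻¹) + (Complex.I/2) * (((t:ℂ)-z₁)⁻¹ * ((t:ℂ)-(-Complex.I))⁻¹) + (Complex.I/2) * (((t:ℂ)-z₂)⁻¹ * ((t:ℂ)-(-Complex.I))⁻¹) + (-Complex.I/4) * (((t:ℂ)-(-Complex.I))⁻¹ * ((t:ℂ)-(-Complex.I))⁻¹) + (Complex.I/4) * (((t:ℂ)-Complex.I)⁻¹ * ((t:ℂ)-Complex.I)⁻¹)) volume := j4.add i5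
  rw [integral_add j5 i6, integral_add j4 i5, integral_add j3 i4, integral_add j2 i3,
      integral_add i1 i2]
  simp only [integral_const_mul]

lemma aux_muDiag_integral (z₁ z₂ : ℂ) :
    ∫ t, kernelK 2 ![z₁, z₂] t ∂muDiag
      = (Real.pi:ℂ) * ∫ t : ℝ, kernelK 2 ![z₁, z₂] (fun _ => t) := by
  have hemb : MeasurableEmbedding (fun t : ℝ => (fun _ : Fin 2 => t)) :=
    (continuous_pi fun _ => continuous_id).measurableEmbedding (fun x y h => congrFun h 0)
  rw [muDiag, integral_smul_measure, hemb.integral_map, ENNReal.toReal_ofReal Real.pi_pos.le]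
  simp [Complex.real_smul]

lemma case_neg (z₁ z₂ : ℂ) (h1 : z₁.im < 0) (h2 : z₂.im < 0) :
    (1 / (Real.pi : ℂ) ^ 2) * ∫ t, kernelK 2 ![z₁, z₂] t ∂muDiag = -Complex.I / 2 := by
  rw [aux_muDiag_integral, aux_integral_kernel z₁ z₂ (ne_of_lt h1) (ne_of_lt h2),
    aux_L_neg_neg z₁ z₂ h1 h2, aux_L_neg_neg z₁ (-Complex.I) h1 (by simp),
    aux_L_neg_neg z₂ (-Complex.I) h2 (by simp), aux_integral_sq (-Complex.I) (by simp),
    aux_integral_sq Complex.I (by simp), aux_L_I]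
  have hπ : (Real.pi:ℂ) ≠ 0 := Complex.ofReal_ne_zero.mpr Real.pi_ne_zero
  field_simp
  ring

lemma case_pos (z₁ z₂ : ℂ) (h1 : z₁.im < 0) (h2 : 0 < z₂.im) :
    (1 / (Real.pi : ℂ) ^ 2) * ∫ t, kernelK 2 ![z₁, z₂] t ∂muDiag
      = -Complex.I / 2 + (z₂ - z₁)⁻¹ - (Complex.I + z₂)⁻¹ := by
  have hπ : (Real.pi:ℂ) ≠ 0 := Complex.ofReal_ne_zero.mpr Real.pi_ne_zero
  have hne : z₁ ≠ z₂ := by intro h; rw [h] at h1; linarith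
  have hz21 : z₂ - z₁ ≠ 0 := sub_ne_zero.mpr (Ne.symm hne)
  have hz12 : z₁ - z₂ ≠ 0 := sub_ne_zero.mpr hne
  have hzI : z₂ + Complex.I ≠ 0 := by
    intro h
    have := congrArg Complex.im h
    simp at this
    linarith
  have hIz : Complex.I + z₂ ≠ 0 := by rw [add_comm]; exact hzI
  rw [aux_muDiag_integral, aux_integral_kernel z₁ z₂ (ne_of_lt h1) (ne_of_gt h2),
    aux_integral_pair z₁ z₂ (ne_of_lt h1) (ne_of_gt h2) hne,
    if_pos h1, if_neg (not_lt.mpr h2.le),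
    aux_L_neg_neg z₁ (-Complex.I) h1 (by simp),
    aux_L_pos_negI z₂ h2, aux_integral_sq (-Complex.I) (by simp),
    aux_integral_sq Complex.I (by simp), aux_L_I]
  have e1 : (-Complex.I/2) * (((-1:ℂ) - 1) * (Real.pi:ℂ) * Complex.I / (z₁ - z₂))
      = (Real.pi:ℂ)/(z₂ - z₁) := by
    calc (-Complex.I/2) * (((-1:ℂ) - 1) * (Real.pi:ℂ) * Complex.I / (z₁ - z₂))
        = (Complex.I*Complex.I) * (Real.pi:ℂ) / (z₁ - z₂) := by ring
      _ = -(Real.pi:ℂ) / (z₁ - z₂) := by rw [Complex.I_mul_I]; ring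
      _ = (Real.pi:ℂ)/(z₂ - z₁) := by
          rw [show z₁ - z₂ = -(z₂ - z₁) from by ring, div_neg]
          ring
  have e2 : (Complex.I/2) * (2 * (Real.pi:ℂ) * Complex.I / (z₂ + Complex.I))
      = -(Real.pi:ℂ)/(z₂ + Complex.I) := by
    calc (Complex.I/2) * (2 * (Real.pi:ℂ) * Complex.I / (z₂ + Complex.I))
        = (Complex.I*Complex.I) * (Real.pi:ℂ) / (z₂ + Complex.I) := by ring
      _ = -(Real.pi:ℂ)/(z₂ + Complex.I) := by rw [Complex.I_mul_I]; ring
  rw [e1, e2]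
  field_simp
  ring


/-- Example 3.5, the function `f₂` on the lower components: on `ℂ⁻ × ℂ⁺` the Cauchy-type
function of `μ₂` equals `−i/2 + 1/(z₂−z₁) − 1/(i+z₂)`, on `ℂ⁻ × ℂ⁻` it equals `−i/2`; in
particular it does not satisfy the variable non-dependence property. -/
theorem diag_measure_cauchy_type_lower :
    (∀ z₁ z₂ : ℂ, z₁.im < 0 → 0 < z₂.im →
      (1 / (Real.pi : ℂ) ^ 2) * ∫ t, kernelK 2 ![z₁, z₂] t ∂muDiag =
        -Complex.I / 2 + (z₂ - z₁)⁻¹ - (Complex.I + z₂)⁻¹) ∧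
    (∀ z₁ z₂ : ℂ, z₁.im < 0 → z₂.im < 0 →
      (1 / (Real.pi : ℂ) ^ 2) * ∫ t, kernelK 2 ![z₁, z₂] t ∂muDiag =
        -Complex.I / 2) ∧
    ¬ VarNonDep 2 (fun z => (1 / (Real.pi : ℂ) ^ 2) * ∫ t, kernelK 2 z t ∂muDiag) := by
  refine ⟨fun z₁ z₂ h1 h2 => case_pos z₁ z₂ h1 h2,
    fun z₁ z₂ h1 h2 => case_neg z₁ z₂ h1 h2, ?_⟩
  intro h
  have him1 : (-2*Complex.I).im < 0 := by simp
  have him2 : (0:ℝ) < (Complex.I).im := by simp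
  have him3 : (0:ℝ) < (2*Complex.I).im := by simp
  have hz : (![-2*Complex.I, Complex.I]) ∈ polyCutPlane 2 := by
    intro j; fin_cases j <;> simp
  have hw : (![-2*Complex.I, 2*Complex.I]) ∈ polyCutPlane 2 := by
    intro j; fin_cases j <;> simp
  have hex : ∃ j, (![-2*Complex.I, Complex.I] j).im < 0 := ⟨0, by simpa using him1⟩
  have hiff : ∀ j, (![-2*Complex.I, Complex.I] j).im < 0 ↔
      (![-2*Complex.I, 2*Complex.I] j).im < 0 := by
    intro j; fin_cases j <;> norm_num
  have heq : ∀ j, (![-2*Complex.I, Complex.I] j).im < 0 →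
      ![-2*Complex.I, Complex.I] j = ![-2*Complex.I, 2*Complex.I] j := by
    intro j; fin_cases j <;> norm_num
  have hmain := h _ hz _ hw hex hiff heq
  simp only at hmain
  rw [case_pos (-2*Complex.I) Complex.I him1 him2,
      case_pos (-2*Complex.I) (2*Complex.I) him1 him3] at hmain
  rw [show Complex.I - (-2*Complex.I) = 3*Complex.I from by ring,
      show Complex.I + Complex.I = 2*Complex.I from by ring,
      show 2*Complex.I - (-2*Complex.I) = 4*Complex.I from by ring,
      show Complex.I + 2*Complex.I = 3*Complex.I from by ring,
      mul_inv, mul_inv, mul_inv, Complex.inv_I] at hmain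
  have h2 := congrArg Complex.im hmain
  simp [Complex.add_im, Complex.sub_im, Complex.mul_im, Complex.div_im] at h2
  norm_num at h2
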